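/- With notation as in the second quantum Weyl algebra A(q1,q2,λ), the map sending X1 ↦ -q1 y1, Y1 ↦ x1, X2 ↦ x2, Y2 ↦ q1 y2 extends to a K-algebra isomorphism A(q1^{-1}, q2, λ^{-1}) → A(q1, q2, λ). -/

import Mathlib

/-- The defining relations of the multiparameter second quantum Weyl algebra
`A(q₁, q₂, λ)`, on the free algebra on generators `x₁ = ι 0`, `y₁ = ι 1`,
`x₂ = ι 2`, `y₂ = ι 3`. -/
inductive Weyl2Rel (K : Type*) [Field K] (q1 q2 lam : K) :
    FreeAlgebra K (Fin 4) → FreeAlgebra K (Fin 4) → Prop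
  | r1 : Weyl2Rel K q1 q2 lam
      (FreeAlgebra.ι K (0 : Fin 4) * FreeAlgebra.ι K (2 : Fin 4))
      ((q1 * lam) • (FreeAlgebra.ι K (2 : Fin 4) * FreeAlgebra.ι K (0 : Fin 4)))
  | r2 : Weyl2Rel K q1 q2 lam
      (FreeAlgebra.ι K (0 : Fin 4) * FreeAlgebra.ι K (3 : Fin 4))
      (lam⁻¹ • (FreeAlgebra.ι K (3 : Fin 4) * FreeAlgebra.ι K (0 : Fin 4)))
  | r3 : Weyl2Rel K q1 q2 lam
      (FreeAlgebra.ι K (1 : Fin 4) * FreeAlgebra.ι K (3 : Fin 4))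
      (lam • (FreeAlgebra.ι K (3 : Fin 4) * FreeAlgebra.ι K (1 : Fin 4)))
  | r4 : Weyl2Rel K q1 q2 lam
      (FreeAlgebra.ι K (1 : Fin 4) * FreeAlgebra.ι K (2 : Fin 4))
      ((q1⁻¹ * lam⁻¹) • (FreeAlgebra.ι K (2 : Fin 4) * FreeAlgebra.ι K (1 : Fin 4)))
  | r5 : Weyl2Rel K q1 q2 lam
      (FreeAlgebra.ι K (0 : Fin 4) * FreeAlgebra.ι K (1 : Fin 4) -
        q1 • (FreeAlgebra.ι K (1 : Fin 4) * FreeAlgebra.ι K (0 : Fin 4))) 1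
  | r6 : Weyl2Rel K q1 q2 lam
      (FreeAlgebra.ι K (2 : Fin 4) * FreeAlgebra.ι K (3 : Fin 4) -
        q2 • (FreeAlgebra.ι K (3 : Fin 4) * FreeAlgebra.ι K (2 : Fin 4)))
      (1 + (q1 - 1) • (FreeAlgebra.ι K (1 : Fin 4) * FreeAlgebra.ι K (0 : Fin 4)))

/-- The multiparameter second quantum Weyl algebra `A(q₁, q₂, λ)`. -/
abbrev Weyl2 (K : Type*) [Field K] (q1 q2 lam : K) := RingQuot (Weyl2Rel K q1 q2 lam)

/-- The generator `x₁` of `A(q₁, q₂, λ)`. -/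
noncomputable abbrev Weyl2.x1 (K : Type*) [Field K] (q1 q2 lam : K) : Weyl2 K q1 q2 lam :=
  RingQuot.mkAlgHom K (Weyl2Rel K q1 q2 lam) (FreeAlgebra.ι K (0 : Fin 4))

/-- The generator `y₁` of `A(q₁, q₂, λ)`. -/
noncomputable abbrev Weyl2.y1 (K : Type*) [Field K] (q1 q2 lam : K) : Weyl2 K q1 q2 lam :=
  RingQuot.mkAlgHom K (Weyl2Rel K q1 q2 lam) (FreeAlgebra.ι K (1 : Fin 4))

/-- The generator `x₂` of `A(q₁, q₂, λ)`. -/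
noncomputable abbrev Weyl2.x2 (K : Type*) [Field K] (q1 q2 lam : K) : Weyl2 K q1 q2 lam :=
  RingQuot.mkAlgHom K (Weyl2Rel K q1 q2 lam) (FreeAlgebra.ι K (2 : Fin 4))

/-- The generator `y₂` of `A(q₁, q₂, λ)`. -/
noncomputable abbrev Weyl2.y2 (K : Type*) [Field K] (q1 q2 lam : K) : Weyl2 K q1 q2 lam :=
  RingQuot.mkAlgHom K (Weyl2Rel K q1 q2 lam) (FreeAlgebra.ι K (3 : Fin 4))

section Aux

variable {K : Type*} [Field K] (q1 q2 lam : K)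

lemma weyl2_rel1 : Weyl2.x1 K q1 q2 lam * Weyl2.x2 K q1 q2 lam
    = (q1 * lam) • (Weyl2.x2 K q1 q2 lam * Weyl2.x1 K q1 q2 lam) := by
  simpa only [map_mul, map_smul] using
    RingQuot.mkAlgHom_rel K (Weyl2Rel.r1 (K := K) (q1 := q1) (q2 := q2) (lam := lam))

lemma weyl2_rel2 : Weyl2.x1 K q1 q2 lam * Weyl2.y2 K q1 q2 lam
    = lam⁻¹ • (Weyl2.y2 K q1 q2 lam * Weyl2.x1 K q1 q2 lam) := by
  simpa only [map_mul, map_smul] using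
    RingQuot.mkAlgHom_rel K (Weyl2Rel.r2 (K := K) (q1 := q1) (q2 := q2) (lam := lam))

lemma weyl2_rel3 : Weyl2.y1 K q1 q2 lam * Weyl2.y2 K q1 q2 lam
    = lam • (Weyl2.y2 K q1 q2 lam * Weyl2.y1 K q1 q2 lam) := by
  simpa only [map_mul, map_smul] using
    RingQuot.mkAlgHom_rel K (Weyl2Rel.r3 (K := K) (q1 := q1) (q2 := q2) (lam := lam))

lemma weyl2_rel4 : Weyl2.y1 K q1 q2 lam * Weyl2.x2 K q1 q2 lam
    = (q1⁻¹ * lam⁻¹) • (Weyl2.x2 K q1 q2 lam * Weyl2.y1 K q1 q2 lam) := by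
  simpa only [map_mul, map_smul] using
    RingQuot.mkAlgHom_rel K (Weyl2Rel.r4 (K := K) (q1 := q1) (q2 := q2) (lam := lam))

lemma weyl2_rel5 : Weyl2.x1 K q1 q2 lam * Weyl2.y1 K q1 q2 lam
    = 1 + q1 • (Weyl2.y1 K q1 q2 lam * Weyl2.x1 K q1 q2 lam) := by
  have h := RingQuot.mkAlgHom_rel K (Weyl2Rel.r5 (K := K) (q1 := q1) (q2 := q2) (lam := lam))
  simp only [map_sub, map_mul, map_smul, map_one] at h
  linear_combination (norm := module) h

lemma weyl2_rel6 : Weyl2.x2 K q1 q2 lam * Weyl2.y2 K q1 q2 lam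
    = 1 + (q1 - 1) • (Weyl2.y1 K q1 q2 lam * Weyl2.x1 K q1 q2 lam)
      + q2 • (Weyl2.y2 K q1 q2 lam * Weyl2.x2 K q1 q2 lam) := by
  have h := RingQuot.mkAlgHom_rel K (Weyl2Rel.r6 (K := K) (q1 := q1) (q2 := q2) (lam := lam))
  simp only [map_sub, map_mul, map_smul, map_one, map_add] at h
  linear_combination (norm := module) h

end Aux

section Helpers

variable {K : Type*} [Field K] {R : Type*} [Ring R] [Algebra K R]

lemma weyl2_hpA (s μ : K) (b c : R) (h : b * c = s • (c * b)) :
    -(μ • b) * c = s • (c * -(μ • b)) := by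
  rw [neg_mul, smul_mul_assoc, h, mul_neg, mul_smul_comm]
  module

lemma weyl2_hpB (s μ ν : K) (b d : R) (h : b * d = s • (d * b)) :
    -(μ • b) * (ν • d) = s • ((ν • d) * -(μ • b)) := by
  rw [neg_mul, smul_mul_assoc, mul_smul_comm, h, mul_neg, smul_mul_assoc, mul_smul_comm]
  module

lemma weyl2_hpC (s ν : K) (a d : R) (h : a * d = s • (d * a)) :
    a * (ν • d) = s • ((ν • d) * a) := by
  rw [mul_smul_comm, h, smul_mul_assoc]
  module

lemma weyl2_hpD (q : K) (hq : q ≠ 0) (a b : R) (h : a * b = 1 + q • (b * a)) :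
    -(q • b) * a - q⁻¹ • (a * -(q • b)) = 1 := by
  rw [neg_mul, smul_mul_assoc, mul_neg, mul_smul_comm, h]
  match_scalars <;> field_simp <;> ring

lemma weyl2_hpE (q : K) (hq : q ≠ 0) (a b : R) (h : a * b = 1 + q⁻¹ • (b * a)) :
    b * -(q⁻¹ • a) - q • (-(q⁻¹ • a) * b) = 1 := by
  rw [mul_neg, mul_smul_comm, neg_mul, smul_mul_assoc, h]
  match_scalars <;> field_simp <;> ring

lemma weyl2_hpF (q q2 : K) (hq : q ≠ 0) (a b c d : R)
    (h5 : a * b = 1 + q • (b * a))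
    (h6 : c * d = 1 + (q - 1) • (b * a) + q2 • (d * c)) :
    c * (q • d) - q2 • ((q • d) * c) = 1 + (q⁻¹ - 1) • (a * -(q • b)) := by
  rw [mul_smul_comm, smul_mul_assoc, h6, mul_neg, mul_smul_comm, h5]
  match_scalars <;> field_simp <;> ring

lemma weyl2_hpG (q q2 : K) (hq : q ≠ 0) (a b c d : R)
    (h5 : a * b = 1 + q⁻¹ • (b * a))
    (h6 : c * d = 1 + (q⁻¹ - 1) • (b * a) + q2 • (d * c)) :
    c * (q⁻¹ • d) - q2 • ((q⁻¹ • d) * c) = 1 + (q - 1) • (-(q⁻¹ • a) * b) := by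
  rw [mul_smul_comm, smul_mul_assoc, h6, neg_mul, smul_mul_assoc, h5]
  match_scalars <;> field_simp <;> ring

end Helpers

/-- `X₁ ↦ -q₁ y₁`, `Y₁ ↦ x₁`, `X₂ ↦ x₂`, `Y₂ ↦ q₁ y₂` extends to a
`K`-algebra isomorphism `A(q₁⁻¹, q₂, λ⁻¹) → A(q₁, q₂, λ)`. -/
theorem stmt_17 {K : Type*} [Field K] (q1 q2 lam : K)
    (hq10 : q1 ≠ 0) (hq11 : q1 ≠ 1) (hq20 : q2 ≠ 0) (hq21 : q2 ≠ 1) (hlam : lam ≠ 0) :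
    ∃ e : Weyl2 K q1⁻¹ q2 lam⁻¹ ≃ₐ[K] Weyl2 K q1 q2 lam,
      e (Weyl2.x1 K q1⁻¹ q2 lam⁻¹) = -(q1 • Weyl2.y1 K q1 q2 lam) ∧
      e (Weyl2.y1 K q1⁻¹ q2 lam⁻¹) = Weyl2.x1 K q1 q2 lam ∧
      e (Weyl2.x2 K q1⁻¹ q2 lam⁻¹) = Weyl2.x2 K q1 q2 lam ∧
      e (Weyl2.y2 K q1⁻¹ q2 lam⁻¹) = q1 • Weyl2.y2 K q1 q2 lam := by
  have hq : q1⁻¹ * q1 = 1 := inv_mul_cancel₀ hq10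
  have hq' : q1 * q1⁻¹ = 1 := mul_inv_cancel₀ hq10
  have T1 := weyl2_rel1 q1 q2 lam
  have T2 := weyl2_rel2 q1 q2 lam
  have T3 := weyl2_rel3 q1 q2 lam
  have T4 := weyl2_rel4 q1 q2 lam
  have T5 := weyl2_rel5 q1 q2 lam
  have T6 := weyl2_rel6 q1 q2 lam
  have S1 := weyl2_rel1 q1⁻¹ q2 lam⁻¹
  have S2 := weyl2_rel2 q1⁻¹ q2 lam⁻¹
  have S3 := weyl2_rel3 q1⁻¹ q2 lam⁻¹
  have S4 := weyl2_rel4 q1⁻¹ q2 lam⁻¹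
  have S5 := weyl2_rel5 q1⁻¹ q2 lam⁻¹
  have S6 := weyl2_rel6 q1⁻¹ q2 lam⁻¹
  simp only [inv_inv] at S1 S2 S3 S4 S5 S6
  set a := Weyl2.x1 K q1 q2 lam with ha
  set b := Weyl2.y1 K q1 q2 lam with hb
  set c := Weyl2.x2 K q1 q2 lam with hc
  set d := Weyl2.y2 K q1 q2 lam with hd
  set a' := Weyl2.x1 K q1⁻¹ q2 lam⁻¹ with ha'
  set b' := Weyl2.y1 K q1⁻¹ q2 lam⁻¹ with hb'
  set c' := Weyl2.x2 K q1⁻¹ q2 lam⁻¹ with hc'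
  set d' := Weyl2.y2 K q1⁻¹ q2 lam⁻¹ with hd'
  let fF : FreeAlgebra K (Fin 4) →ₐ[K] Weyl2 K q1 q2 lam :=
    FreeAlgebra.lift K ![-(q1 • b), a, c, q1 • d]
  let fG : FreeAlgebra K (Fin 4) →ₐ[K] Weyl2 K q1⁻¹ q2 lam⁻¹ :=
    FreeAlgebra.lift K ![b', -(q1⁻¹ • a'), c', q1⁻¹ • d']
  have hfF : ∀ i, fF (FreeAlgebra.ι K i) = ![-(q1 • b), a, c, q1 • d] i := fun i =>
    FreeAlgebra.lift_ι_apply _ _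
  have hfG : ∀ i, fG (FreeAlgebra.ι K i) = ![b', -(q1⁻¹ • a'), c', q1⁻¹ • d'] i := fun i =>
    FreeAlgebra.lift_ι_apply _ _
  have hF : ∀ ⦃x y⦄, Weyl2Rel K q1⁻¹ q2 lam⁻¹ x y → fF x = fF y := by
    intro x y h
    induction h with
    | r1 =>
        simp only [map_mul, map_smul, hfF]
        simp only [Matrix.cons_val_zero, Matrix.cons_val_one, Matrix.head_cons,
          Matrix.cons_val_two, Matrix.tail_cons, Matrix.cons_val_three, inv_inv]
        exact weyl2_hpA _ _ _ _ T4
    | r2 =>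
        simp only [map_mul, map_smul, hfF]
        simp only [Matrix.cons_val_zero, Matrix.cons_val_one, Matrix.head_cons,
          Matrix.cons_val_two, Matrix.tail_cons, Matrix.cons_val_three, inv_inv]
        exact weyl2_hpB _ _ _ _ _ T3
    | r3 =>
        simp only [map_mul, map_smul, hfF]
        simp only [Matrix.cons_val_zero, Matrix.cons_val_one, Matrix.head_cons,
          Matrix.cons_val_two, Matrix.tail_cons, Matrix.cons_val_three, inv_inv]
        exact weyl2_hpC _ _ _ _ T2
    | r4 =>
        simp only [map_mul, map_smul, hfF]
        simp only [Matrix.cons_val_zero, Matrix.cons_val_one, Matrix.head_cons,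
          Matrix.cons_val_two, Matrix.tail_cons, Matrix.cons_val_three, inv_inv]
        exact T1
    | r5 =>
        simp only [map_sub, map_mul, map_smul, map_one, hfF]
        simp only [Matrix.cons_val_zero, Matrix.cons_val_one, Matrix.head_cons,
          Matrix.cons_val_two, Matrix.tail_cons, Matrix.cons_val_three, inv_inv]
        exact weyl2_hpD _ hq10 _ _ T5
    | r6 =>
        simp only [map_sub, map_add, map_mul, map_smul, map_one, hfF]
        simp only [Matrix.cons_val_zero, Matrix.cons_val_one, Matrix.head_cons,
          Matrix.cons_val_two, Matrix.tail_cons, Matrix.cons_val_three, inv_inv]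
        exact weyl2_hpF _ _ hq10 _ _ _ _ T5 T6
  have hG : ∀ ⦃x y⦄, Weyl2Rel K q1 q2 lam x y → fG x = fG y := by
    intro x y h
    induction h with
    | r1 =>
        simp only [map_mul, map_smul, hfG]
        simp only [Matrix.cons_val_zero, Matrix.cons_val_one, Matrix.head_cons,
          Matrix.cons_val_two, Matrix.tail_cons, Matrix.cons_val_three, inv_inv]
        exact S4
    | r2 =>
        simp only [map_mul, map_smul, hfG]
        simp only [Matrix.cons_val_zero, Matrix.cons_val_one, Matrix.head_cons,
          Matrix.cons_val_two, Matrix.tail_cons, Matrix.cons_val_three, inv_inv]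
        exact weyl2_hpC _ _ _ _ S3
    | r3 =>
        simp only [map_mul, map_smul, hfG]
        simp only [Matrix.cons_val_zero, Matrix.cons_val_one, Matrix.head_cons,
          Matrix.cons_val_two, Matrix.tail_cons, Matrix.cons_val_three, inv_inv]
        exact weyl2_hpB _ _ _ _ _ S2
    | r4 =>
        simp only [map_mul, map_smul, hfG]
        simp only [Matrix.cons_val_zero, Matrix.cons_val_one, Matrix.head_cons,
          Matrix.cons_val_two, Matrix.tail_cons, Matrix.cons_val_three, inv_inv]
        exact weyl2_hpA _ _ _ _ S1
    | r5 =>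
        simp only [map_sub, map_mul, map_smul, map_one, hfG]
        simp only [Matrix.cons_val_zero, Matrix.cons_val_one, Matrix.head_cons,
          Matrix.cons_val_two, Matrix.tail_cons, Matrix.cons_val_three, inv_inv]
        exact weyl2_hpE _ hq10 _ _ S5
    | r6 =>
        simp only [map_sub, map_add, map_mul, map_smul, map_one, hfG]
        simp only [Matrix.cons_val_zero, Matrix.cons_val_one, Matrix.head_cons,
          Matrix.cons_val_two, Matrix.tail_cons, Matrix.cons_val_three, inv_inv]
        exact weyl2_hpG _ _ hq10 _ _ _ _ S5 S6
  let F : Weyl2 K q1⁻¹ q2 lam⁻¹ →ₐ[K] Weyl2 K q1 q2 lam :=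
    RingQuot.liftAlgHom K ⟨fF, hF⟩
  let G : Weyl2 K q1 q2 lam →ₐ[K] Weyl2 K q1⁻¹ q2 lam⁻¹ :=
    RingQuot.liftAlgHom K ⟨fG, hG⟩
  have hFmk : ∀ x, F (RingQuot.mkAlgHom K (Weyl2Rel K q1⁻¹ q2 lam⁻¹) x) = fF x := fun x =>
    RingQuot.liftAlgHom_mkAlgHom_apply K fF hF x
  have hGmk : ∀ x, G (RingQuot.mkAlgHom K (Weyl2Rel K q1 q2 lam) x) = fG x := fun x =>
    RingQuot.liftAlgHom_mkAlgHom_apply K fG hG x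
  have Fa' : F a' = -(q1 • b) := by
    rw [ha', hFmk]; rw [hfF]; simp only [Matrix.cons_val_zero]
  have Fb' : F b' = a := by
    rw [hb', hFmk]; rw [hfF]; simp only [Matrix.cons_val_one, Matrix.head_cons, Matrix.cons_val_zero]
  have Fc' : F c' = c := by
    rw [hc', hFmk]; rw [hfF]
    simp only [Matrix.cons_val_two, Matrix.tail_cons, Matrix.head_cons]
  have Fd' : F d' = q1 • d := by
    rw [hd', hFmk]; rw [hfF]
    simp only [Matrix.cons_val_three, Matrix.tail_cons, Matrix.head_cons]
  have Ga : G a = b' := by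
    rw [ha, hGmk]; rw [hfG]; simp only [Matrix.cons_val_zero]
  have Gb : G b = -(q1⁻¹ • a') := by
    rw [hb, hGmk]; rw [hfG]; simp only [Matrix.cons_val_one, Matrix.head_cons, Matrix.cons_val_zero]
  have Gc : G c = c' := by
    rw [hc, hGmk]; rw [hfG]
    simp only [Matrix.cons_val_two, Matrix.tail_cons, Matrix.head_cons]
  have Gd : G d = q1⁻¹ • d' := by
    rw [hd, hGmk]; rw [hfG]
    simp only [Matrix.cons_val_three, Matrix.tail_cons, Matrix.head_cons]
  have hFG : F.comp G = AlgHom.id K (Weyl2 K q1 q2 lam) := by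
    apply RingQuot.ringQuot_ext'
    apply FreeAlgebra.hom_ext
    funext i
    fin_cases i
    · show F (G a) = a
      rw [Ga, Fb']
    · show F (G b) = b
      rw [Gb, map_neg, map_smul, Fa', smul_neg, neg_neg, smul_smul, hq, one_smul]
    · show F (G c) = c
      rw [Gc, Fc']
    · show F (G d) = d
      rw [Gd, map_smul, Fd', smul_smul, hq, one_smul]
  have hGF : G.comp F = AlgHom.id K (Weyl2 K q1⁻¹ q2 lam⁻¹) := by
    apply RingQuot.ringQuot_ext'
    apply FreeAlgebra.hom_ext
    funext i
    fin_cases i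
    · show G (F a') = a'
      rw [Fa', map_neg, map_smul, Gb, smul_neg, neg_neg, smul_smul, hq', one_smul]
    · show G (F b') = b'
      rw [Fb', Ga]
    · show G (F c') = c'
      rw [Fc', Gc]
    · show G (F d') = d'
      rw [Fd', map_smul, Gd, smul_smul, hq', one_smul]
  refine ⟨AlgEquiv.ofAlgHom F G hFG hGF, ?_, ?_, ?_, ?_⟩
  · exact Fa'
  · exact Fb'
  · exact Fc'
  · exact Fd'
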